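/- arXiv:1812.10859 — 4 statements merged into one kernel-verified Lean document; each statement's English description precedes it below -/
import Mathlib

section
/- Let Y ∈ ℝ^{d×N}, D ∈ ℝ^{d×K}, X ∈ ℝ^{K×N}. With class selector matrices W_1,…,W_C on the K dictionary indices and column selector matrices P_1,…,P_C on the N sample indices, define the FDDL discriminative fidelity f_{Y,X}(D) = ‖Y − DX‖_F² + Σ_{c=1}^C ( ‖(Y − D W_c X)P_c‖_F² + Σ_{j≠c} ‖D W_j X P_c‖_F² ). Then f_{Y,X}(D) = −2·trace(E Dᵀ) + trace(F Dᵀ D) + 2‖Y‖_F², where E = Y Xᵀ + Σ_{c=1}^C Y P_c Xᵀ W_c and F = X Xᵀ + Σ_{j=1}^C W_j X Xᵀ W_j. In particular, minimizing f_{Y,X}(D) over D is equivalent to minimizing −2·trace(E Dᵀ) + trace(F Dᵀ D). -/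
open Matrix Finset

/-- Squared Frobenius norm: `‖A‖_F² = trace (A * Aᵀ)`. -/
noncomputable def frobSq {m n : Type*} [Fintype m] [Fintype n] (A : Matrix m n ℝ) : ℝ :=
  Matrix.trace (A * Aᵀ)

/-- Diagonal 0/1 selector matrix for class `j` determined by a labeling `cl`. -/
noncomputable def sel {K C : ℕ} (cl : Fin K → Fin C) (j : Fin C) :
    Matrix (Fin K) (Fin K) ℝ :=
  Matrix.diagonal fun i => if cl i = j then (1 : ℝ) else 0

lemma sel_transpose {K C : ℕ} (cl : Fin K → Fin C) (j : Fin C) : (sel cl j)ᵀ = sel cl j :=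
  Matrix.diagonal_transpose _

lemma sel_mul_self {K C : ℕ} (cl : Fin K → Fin C) (j : Fin C) :
    sel cl j * sel cl j = sel cl j := by
  rw [sel, Matrix.diagonal_mul_diagonal]
  refine congrArg Matrix.diagonal ?_
  funext i; split <;> simp

lemma sel_sum {K C : ℕ} (cl : Fin K → Fin C) :
    (∑ j : Fin C, sel cl j) = (1 : Matrix (Fin K) (Fin K) ℝ) := by
  ext i j
  simp [sel, Matrix.sum_apply, Matrix.diagonal_apply, Matrix.one_apply]

lemma frobSq_mulD {d K n : ℕ} (D : Matrix (Fin d) (Fin K) ℝ) (M : Matrix (Fin K) (Fin n) ℝ) :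
    frobSq (D * M) = Matrix.trace (M * Mᵀ * Dᵀ * D) := by
  unfold frobSq
  rw [Matrix.transpose_mul]
  simp only [Matrix.mul_assoc]
  rw [Matrix.trace_mul_comm]
  simp only [Matrix.mul_assoc]

lemma crossTrace {d K n : ℕ} (A : Matrix (Fin d) (Fin n) ℝ) (M : Matrix (Fin K) (Fin n) ℝ)
    (D : Matrix (Fin d) (Fin K) ℝ) :
    Matrix.trace (D * M * Aᵀ) = Matrix.trace (A * Mᵀ * Dᵀ) := by
  rw [← Matrix.trace_transpose (D * M * Aᵀ)]
  simp [Matrix.transpose_mul, Matrix.mul_assoc]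

lemma expandSub {d K n : ℕ} (A : Matrix (Fin d) (Fin n) ℝ) (M : Matrix (Fin K) (Fin n) ℝ)
    (D : Matrix (Fin d) (Fin K) ℝ) :
    frobSq (A - D * M) =
      frobSq A - 2 * Matrix.trace (A * Mᵀ * Dᵀ) + Matrix.trace (M * Mᵀ * Dᵀ * D) := by
  have h3 := frobSq_mulD D M
  unfold frobSq at *
  rw [Matrix.transpose_sub, Matrix.sub_mul, Matrix.mul_sub, Matrix.mul_sub,
    Matrix.trace_sub, Matrix.trace_sub, Matrix.trace_sub]
  have h1 : Matrix.trace (A * (D * M)ᵀ) = Matrix.trace (A * Mᵀ * Dᵀ) := by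
    simp [Matrix.transpose_mul, Matrix.mul_assoc]
  have h2 : Matrix.trace (D * M * Aᵀ) = Matrix.trace (A * Mᵀ * Dᵀ) := crossTrace A M D
  rw [h1, h2, h3]; ring

lemma sel_mul_mul {K C : ℕ} (cl : Fin K → Fin C) (c : Fin C) (n : ℕ)
    (Z : Matrix (Fin K) (Fin n) ℝ) : sel cl c * (sel cl c * Z) = sel cl c * Z := by
  rw [← Matrix.mul_assoc, sel_mul_self]

lemma prodP {m k N C : ℕ} (lab : Fin N → Fin C) (c : Fin C)
    (A : Matrix (Fin m) (Fin N) ℝ) (B : Matrix (Fin k) (Fin N) ℝ) :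
    (A * sel lab c) * (B * sel lab c)ᵀ = A * sel lab c * Bᵀ := by
  simp only [Matrix.transpose_mul, sel_transpose, Matrix.mul_assoc, sel_mul_mul]

lemma quadTerm {d N K C : ℕ} (X : Matrix (Fin K) (Fin N) ℝ)
    (cl : Fin K → Fin C) (lab : Fin N → Fin C) (j c : Fin C)
    (D : Matrix (Fin d) (Fin K) ℝ) :
    frobSq (D * sel cl j * X * sel lab c) =
      Matrix.trace (sel cl j * X * sel lab c * Xᵀ * sel cl j * Dᵀ * D) := by
  have h1 : D * sel cl j * X * sel lab c = D * (sel cl j * X * sel lab c) := by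
    simp only [Matrix.mul_assoc]
  rw [h1, frobSq_mulD, prodP lab c (sel cl j * X) (sel cl j * X)]
  simp only [Matrix.transpose_mul, sel_transpose, Matrix.mul_assoc]

lemma mainTerm {d N K C : ℕ} (Y : Matrix (Fin d) (Fin N) ℝ) (X : Matrix (Fin K) (Fin N) ℝ)
    (cl : Fin K → Fin C) (lab : Fin N → Fin C) (c : Fin C)
    (D : Matrix (Fin d) (Fin K) ℝ) :
    frobSq ((Y - D * sel cl c * X) * sel lab c) =
      Matrix.trace (Y * sel lab c * Yᵀ)
      - 2 * Matrix.trace (Y * sel lab c * Xᵀ * sel cl c * Dᵀ)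
      + Matrix.trace (sel cl c * X * sel lab c * Xᵀ * sel cl c * Dᵀ * D) := by
  have h0 : (Y - D * sel cl c * X) * sel lab c
      = Y * sel lab c - D * (sel cl c * X * sel lab c) := by
    rw [Matrix.sub_mul]; simp only [Matrix.mul_assoc]
  rw [h0, expandSub]
  have hA : frobSq (Y * sel lab c) = Matrix.trace (Y * sel lab c * Yᵀ) := by
    unfold frobSq; rw [prodP]
  have hB : Y * sel lab c * (sel cl c * X * sel lab c)ᵀ
      = Y * sel lab c * Xᵀ * sel cl c := by
    have := prodP lab c Y (sel cl c * X)
    rw [this]; simp only [Matrix.transpose_mul, sel_transpose, Matrix.mul_assoc]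
  have hC : sel cl c * X * sel lab c * (sel cl c * X * sel lab c)ᵀ
      = sel cl c * X * sel lab c * Xᵀ * sel cl c := by
    rw [prodP lab c (sel cl c * X) (sel cl c * X)]
    simp only [Matrix.transpose_mul, sel_transpose, Matrix.mul_assoc]
  rw [hA, hB, hC]

/-- The FDDL discriminative fidelity satisfies
`f_{Y,X}(D) = −2·trace(E Dᵀ) + trace(F Dᵀ D) + 2‖Y‖_F²`, and hence minimizing it over `D`
is equivalent to minimizing `−2·trace(E Dᵀ) + trace(F Dᵀ D)`. -/
theorem stmt0 {d N K C : ℕ}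
    (Y : Matrix (Fin d) (Fin N) ℝ) (X : Matrix (Fin K) (Fin N) ℝ)
    (cl : Fin K → Fin C) (lab : Fin N → Fin C)
    (W : Fin C → Matrix (Fin K) (Fin K) ℝ) (hW : W = sel cl)
    (P : Fin C → Matrix (Fin N) (Fin N) ℝ) (hP : P = sel lab)
    (f : Matrix (Fin d) (Fin K) ℝ → ℝ)
    (hf : ∀ D : Matrix (Fin d) (Fin K) ℝ,
      f D = frobSq (Y - D * X) +
        ∑ c : Fin C, (frobSq ((Y - D * W c * X) * P c) +
          ∑ j ∈ Finset.univ.erase c, frobSq (D * W j * X * P c)))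
    (E : Matrix (Fin d) (Fin K) ℝ)
    (hE : E = Y * Xᵀ + ∑ c : Fin C, Y * P c * Xᵀ * W c)
    (F : Matrix (Fin K) (Fin K) ℝ)
    (hF : F = X * Xᵀ + ∑ j : Fin C, W j * X * Xᵀ * W j) :
    (∀ D : Matrix (Fin d) (Fin K) ℝ,
      f D = -2 * Matrix.trace (E * Dᵀ) + Matrix.trace (F * Dᵀ * D) + 2 * frobSq Y)
    ∧ (∀ Dstar : Matrix (Fin d) (Fin K) ℝ,
        (∀ D : Matrix (Fin d) (Fin K) ℝ, f Dstar ≤ f D) ↔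
        (∀ D : Matrix (Fin d) (Fin K) ℝ, -2 * Matrix.trace (E * Dstarᵀ) + Matrix.trace (F * Dstarᵀ * Dstar) ≤
              -2 * Matrix.trace (E * Dᵀ) + Matrix.trace (F * Dᵀ * D))) := by
  subst hW hP hE hF
  have key : ∀ D : Matrix (Fin d) (Fin K) ℝ,
      f D = -2 * Matrix.trace ((Y * Xᵀ + ∑ c : Fin C, Y * sel lab c * Xᵀ * sel cl c) * Dᵀ)
        + Matrix.trace ((X * Xᵀ + ∑ j : Fin C, sel cl j * X * Xᵀ * sel cl j) * Dᵀ * D)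
        + 2 * frobSq Y := by
    intro D
    rw [hf D, expandSub Y X D]
    have hsum : ∀ c : Fin C,
        frobSq ((Y - D * sel cl c * X) * sel lab c) +
          ∑ j ∈ Finset.univ.erase c, frobSq (D * sel cl j * X * sel lab c)
        = Matrix.trace (Y * sel lab c * Yᵀ)
          - 2 * Matrix.trace (Y * sel lab c * Xᵀ * sel cl c * Dᵀ)
          + ∑ j : Fin C, Matrix.trace (sel cl j * X * sel lab c * Xᵀ * sel cl j * Dᵀ * D) := by
      intro c
      rw [mainTerm]
      rw [Finset.sum_congr rfl (fun j _ => quadTerm X cl lab j c D)]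
      rw [← Finset.add_sum_erase _
        (fun j => Matrix.trace (sel cl j * X * sel lab c * Xᵀ * sel cl j * Dᵀ * D))
        (Finset.mem_univ c)]
      ring
    rw [Finset.sum_congr rfl (fun c _ => hsum c)]
    have hsplit :
        (∑ c : Fin C, (Matrix.trace (Y * sel lab c * Yᵀ)
          - 2 * Matrix.trace (Y * sel lab c * Xᵀ * sel cl c * Dᵀ)
          + ∑ j : Fin C, Matrix.trace (sel cl j * X * sel lab c * Xᵀ * sel cl j * Dᵀ * D)))
        = (∑ c : Fin C, Matrix.trace (Y * sel lab c * Yᵀ))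
          - 2 * (∑ c : Fin C, Matrix.trace (Y * sel lab c * Xᵀ * sel cl c * Dᵀ))
          + ∑ c : Fin C, ∑ j : Fin C,
              Matrix.trace (sel cl j * X * sel lab c * Xᵀ * sel cl j * Dᵀ * D) := by
      rw [Finset.sum_add_distrib, Finset.sum_sub_distrib, Finset.mul_sum]
    rw [hsplit]
    have hY : (∑ c : Fin C, Matrix.trace (Y * sel lab c * Yᵀ)) = frobSq Y := by
      rw [← Matrix.trace_sum]
      have h : (∑ c : Fin C, Y * sel lab c * Yᵀ) = Y * Yᵀ := by
        rw [← Matrix.sum_mul, ← Matrix.mul_sum, sel_sum, Matrix.mul_one]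
      rw [h]; rfl
    have hEtr : Matrix.trace ((∑ c : Fin C, Y * sel lab c * Xᵀ * sel cl c) * Dᵀ)
        = ∑ c : Fin C, Matrix.trace (Y * sel lab c * Xᵀ * sel cl c * Dᵀ) := by
      rw [Matrix.sum_mul, Matrix.trace_sum]
    have hQ : (∑ c : Fin C, ∑ j : Fin C,
          Matrix.trace (sel cl j * X * sel lab c * Xᵀ * sel cl j * Dᵀ * D))
        = ∑ j : Fin C, Matrix.trace (sel cl j * X * Xᵀ * sel cl j * Dᵀ * D) := by
      rw [Finset.sum_comm]
      refine Finset.sum_congr rfl fun j _ => ?_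
      have hre : ∀ c : Fin C, sel cl j * X * sel lab c * Xᵀ * sel cl j * Dᵀ * D
          = sel cl j * X * (sel lab c * (Xᵀ * (sel cl j * (Dᵀ * D)))) := by
        intro c; simp only [Matrix.mul_assoc]
      simp only [hre]
      rw [← Matrix.trace_sum, ← Matrix.mul_sum, ← Matrix.sum_mul, sel_sum, Matrix.one_mul]
      simp only [Matrix.mul_assoc]
    rw [hY, hQ]
    simp only [Matrix.add_mul, Matrix.trace_add]
    rw [hEtr]
    have hFtr : Matrix.trace ((∑ j : Fin C, sel cl j * X * Xᵀ * sel cl j) * Dᵀ * D)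
        = ∑ j : Fin C, Matrix.trace (sel cl j * X * Xᵀ * sel cl j * Dᵀ * D) := by
      rw [Matrix.sum_mul, Matrix.sum_mul, Matrix.trace_sum]
    rw [hFtr]
    ring
  refine ⟨key, fun Dstar => ⟨fun h D => ?_, fun h D => ?_⟩⟩
  · have := h D; rw [key D, key Dstar] at this; linarith
  · have := h D; rw [key D, key Dstar]; linarith
end

section
/- Consider variables X_1 ∈ ℝ^{K×n_1}, …, X_C ∈ ℝ^{K×n_C} with N = Σ_l n_l, column means m_c = (1/n_c)·X_c·1_{n_c}, overall mean m = (1/N)·Σ_l X_l·1_{n_l}, and constant-column matrices M_c^{(q)}, M^{(q)} ∈ ℝ^{K×q} whose columns all equal m_c and m respectively. Then the function ψ(X_1,…,X_C) = (1/2)·Σ_{c=1}^C ‖M_c^{(n_c)} − M^{(n_c)}‖_F² is differentiable and its partial gradient with respect to X_l equals M_l^{(n_l)} − M^{(n_l)} for every l; equivalently, writing blocks side by side, ∇ψ = [M_1^{(n_1)}, …, M_C^{(n_C)}] − M^{(N)} = M̂ − M. -/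
open Matrix Finset

attribute [local instance] Matrix.normedAddCommGroup Matrix.normedSpace

/-- The continuous linear functional `H ↦ ⟨G, H⟩_F = trace (G * Hᵀ)`. -/
noncomputable def frobCLM {m n : Type*} [Fintype m] [Fintype n]
    (G : Matrix m n ℝ) : Matrix m n ℝ →L[ℝ] ℝ :=
  LinearMap.toContinuousLinearMap
  { toFun := fun H => Matrix.trace (G * Hᵀ)
    map_add' := fun H₁ H₂ => by simp [Matrix.transpose_add, Matrix.mul_add]
    map_smul' := fun r H => by simp [Matrix.transpose_smul, Matrix.mul_smul] }

/-- The column mean `(1/q)·Z·1_q` of a `K × q` matrix. -/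
noncomputable def colMean {K q : ℕ} (Z : Matrix (Fin K) (Fin q) ℝ) : Fin K → ℝ :=
  fun i => (1 / (q : ℝ)) * ∑ j, Z i j

/-- The `K × q` matrix all of whose columns equal `v`. -/
def constCols {K : ℕ} (v : Fin K → ℝ) (q : ℕ) : Matrix (Fin K) (Fin q) ℝ :=
  Matrix.of fun i _ => v i


lemma frobSq_constCols_sub {K q : ℕ} (u v : Fin K → ℝ) :
    frobSq (constCols u q - constCols v q) = (q : ℝ) * ∑ i, (u i - v i) * (u i - v i) := by
  simp only [frobSq, Matrix.trace, Matrix.diag_apply, Matrix.mul_apply, Matrix.transpose_apply,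
    Matrix.sub_apply, constCols, Matrix.of_apply, Finset.sum_const, Finset.card_univ,
    Fintype.card_fin, nsmul_eq_mul, Finset.mul_sum]

/-- For `ψ(X_1,…,X_C) = ½·Σ_c ‖M_c^{(n_c)} − M^{(n_c)}‖_F²`, the partial gradient with
respect to `X_l` equals `M_l^{(n_l)} − M^{(n_l)}` for every `l`. -/
theorem stmt7 {K C : ℕ} (n : Fin C → ℕ) (hn : ∀ l, 1 ≤ n l)
    (N : ℕ) (hN : N = ∑ l, n l)
    (m : (∀ l, Matrix (Fin K) (Fin (n l)) ℝ) → Fin K → ℝ)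
    (hm : ∀ X i, m X i = (1 / (N : ℝ)) * ∑ l, ∑ j, X l i j)
    (ψ : (∀ l, Matrix (Fin K) (Fin (n l)) ℝ) → ℝ)
    (hψ : ∀ X, ψ X = (1/2) * ∑ c : Fin C,
      frobSq (constCols (colMean (X c)) (n c) - constCols (m X) (n c)))
    (X : ∀ l, Matrix (Fin K) (Fin (n l)) ℝ) :
    ∀ l, HasFDerivAt (fun Z : Matrix (Fin K) (Fin (n l)) ℝ => ψ (Function.update X l Z))
      (frobCLM (constCols (colMean (X l)) (n l) - constCols (m X) (n l)))
      (X l) := by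
  intro l
  classical
  have hNn : 1 ≤ N := by
    rw [hN]
    calc 1 ≤ n l := hn l
    _ ≤ ∑ c, n c := Finset.single_le_sum (fun c _ => Nat.zero_le _) (Finset.mem_univ l)
  have hN0 : (N : ℝ) ≠ 0 := Nat.cast_ne_zero.mpr (by omega)
  have hl0 : ((n l : ℝ)) ≠ 0 := Nat.cast_ne_zero.mpr (by have := hn l; omega)
  set E := Matrix (Fin K) (Fin (n l)) ℝ with hE
  set L : Fin K → (E →L[ℝ] ℝ) := fun i =>
    LinearMap.toContinuousLinearMap
      { toFun := fun Z : E => ∑ j, Z i j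
        map_add' := fun Z W => Finset.sum_add_distrib
        map_smul' := fun r Z => (Finset.mul_sum Finset.univ (fun j => Z i j) r).symm } with hLdef
  have L_apply : ∀ i (Z : E), L i Z = ∑ j, Z i j := fun i Z => rfl
  set T : Fin K → ℝ := fun i => ∑ c ∈ Finset.univ.erase l, ∑ j, X c i j with hT
  set a : Fin C → ℝ := fun c => (if c = l then (1/(n l : ℝ)) else 0) - 1/(N : ℝ) with ha
  set b : Fin C → Fin K → ℝ := fun c i =>
    (if c = l then 0 else colMean (X c) i) - T i/(N : ℝ) with hb
  have hsum_upd : ∀ (Z : E) i, (∑ c, ∑ j, (Function.update X l Z c) i j)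
      = (∑ j, Z i j) + T i := by
    intro Z i
    rw [← Finset.add_sum_erase _ _ (Finset.mem_univ l)]
    congr 1
    · simp
    · apply Finset.sum_congr rfl
      intro c hc
      rw [Function.update_of_ne (Finset.ne_of_mem_erase hc)]
  have hmupd : ∀ (Z : E) i, m (Function.update X l Z) i
      = (1/(N : ℝ)) * ((∑ j, Z i j) + T i) := by
    intro Z i; rw [hm, hsum_upd]
  have hmX : ∀ i, m X i = (1/(N : ℝ)) * ((∑ j, X l i j) + T i) := by
    intro i
    have := hmupd (X l) i
    rwa [Function.update_eq_self] at this
  have key : ∀ Z : E, ψ (Function.update X l Z)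
      = (1/2) * ∑ c, (n c : ℝ) *
          ∑ i, (a c * (∑ j, Z i j) + b c i) * (a c * (∑ j, Z i j) + b c i) := by
    intro Z
    rw [hψ]
    congr 1
    apply Finset.sum_congr rfl
    intro c _
    rw [frobSq_constCols_sub]
    congr 1
    apply Finset.sum_congr rfl
    intro i _
    rw [hmupd]
    rcases eq_or_ne c l with rfl | hc
    · simp only [Function.update_self, ha, hb, eq_self_iff_true, if_true, colMean]
      ring
    · rw [Function.update_of_ne hc]
      simp only [ha, hb, if_neg hc]
      ring
  rw [show (fun Z : E => ψ (Function.update X l Z)) = _ from funext key]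
  have hder : HasFDerivAt
      (fun Z : E => (1/2) * ∑ c, (n c : ℝ) *
          ∑ i, (a c * (∑ j, Z i j) + b c i) * (a c * (∑ j, Z i j) + b c i))
      ((1/2 : ℝ) • ∑ c, (n c : ℝ) • ∑ i,
        ((a c * (∑ j, (X l) i j) + b c i) • ((a c) • L i)
          + (a c * (∑ j, (X l) i j) + b c i) • ((a c) • L i))) (X l) := by
    apply HasFDerivAt.const_mul
    apply HasFDerivAt.fun_sum
    intro c _
    apply HasFDerivAt.const_mul
    apply HasFDerivAt.fun_sum
    intro i _
    have haff : HasFDerivAt (fun Z : E => a c * (∑ j, Z i j) + b c i)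
        ((a c) • L i) (X l) :=
      (((L i).hasFDerivAt).const_mul (a c)).add_const (b c i)
    exact haff.mul haff
  convert hder using 1
  -- now the equality of the two continuous linear maps
  have hsumn : (∑ c, (n c : ℝ)) = (N : ℝ) := by rw [hN]; push_cast; ring
  have hsum1 : ∀ i, ∑ c, (n c : ℝ) * colMean (X c) i = (∑ j, X l i j) + T i := by
    intro i
    have e : ∀ c : Fin C, (n c : ℝ) * colMean (X c) i = ∑ j, X c i j := by
      intro c
      have hc0 : ((n c : ℝ)) ≠ 0 := Nat.cast_ne_zero.mpr (by have := hn c; omega)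
      rw [colMean]
      field_simp
    rw [Finset.sum_congr rfl fun c _ => e c]
    have := hsum_upd (X l) i
    rwa [Function.update_eq_self] at this
  ext H
  have lhs_eq : frobCLM (constCols (colMean (X l)) (n l) - constCols (m X) (n l)) H
      = ∑ i, (colMean (X l) i - m X i) * (∑ j, H i j) := by
    show Matrix.trace ((constCols (colMean (X l)) (n l) - constCols (m X) (n l)) * Hᵀ) = _
    simp only [Matrix.trace, Matrix.diag_apply, Matrix.mul_apply, Matrix.transpose_apply,
      Matrix.sub_apply, constCols, Matrix.of_apply, Finset.mul_sum]
  rw [lhs_eq]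
  simp only [ContinuousLinearMap.smul_apply, ContinuousLinearMap.coe_sum',
    Finset.sum_apply, ContinuousLinearMap.add_apply, L_apply, smul_eq_mul]
  have hptwise : ∀ i, (∑ c, (n c : ℝ) *
      ((a c * (∑ j, X l i j) + b c i) * (a c * (∑ j, H i j))
        + (a c * (∑ j, X l i j) + b c i) * (a c * (∑ j, H i j))))
      = 2 * (∑ j, H i j) * (colMean (X l) i - m X i) := by
    intro i
    set s := ∑ j, X l i j with hs
    set h := ∑ j, H i j with hh
    have e1 : ∀ c : Fin C, (n c : ℝ) *
        ((a c * s + b c i) * (a c * h) + (a c * s + b c i) * (a c * h))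
        = -(2*h/(N : ℝ))*((n c : ℝ)*colMean (X c) i - (n c : ℝ)*(m X i))
          + (if c = l then 2*h*(colMean (X l) i - m X i) else 0) := by
      intro c
      rcases eq_or_ne c l with rfl | hc
      · simp only [ha, hb, eq_self_iff_true, if_true]
        have hmu : colMean (X c) i = (1/(n c : ℝ)) * s := rfl
        rw [hmu, hmX i]
        field_simp
        ring
      · simp only [ha, hb, if_neg hc]
        rw [hmX i]
        field_simp
        ring
    rw [Finset.sum_congr rfl fun c _ => e1 c, Finset.sum_add_distrib,
      Finset.sum_ite_eq' Finset.univ l]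
    have hzero : (∑ c, -(2*h/(N : ℝ))*((n c : ℝ)*colMean (X c) i - (n c : ℝ)*(m X i))) = 0 := by
      rw [← Finset.mul_sum, Finset.sum_sub_distrib, hsum1, ← Finset.sum_mul, hsumn, hmX i]
      field_simp
      ring
    rw [hzero]
    simp
  calc (∑ i, (colMean (X l) i - m X i) * (∑ j, H i j))
      = ∑ i, (1/2 : ℝ) * (2 * (∑ j, H i j) * (colMean (X l) i - m X i)) := by
        apply Finset.sum_congr rfl
        intro i _
        ring
    _ = ∑ i, (1/2 : ℝ) * (∑ c, (n c : ℝ) *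
          ((a c * (∑ j, X l i j) + b c i) * (a c * (∑ j, H i j))
            + (a c * (∑ j, X l i j) + b c i) * (a c * (∑ j, H i j)))) := by
        apply Finset.sum_congr rfl
        intro i _
        rw [hptwise i]
    _ = (1/2 : ℝ) * ∑ i, ∑ c, (n c : ℝ) *
          ((a c * (∑ j, X l i j) + b c i) * (a c * (∑ j, H i j))
            + (a c * (∑ j, X l i j) + b c i) * (a c * (∑ j, H i j))) := by
        rw [Finset.mul_sum]
    _ = (1/2 : ℝ) * ∑ c, ∑ i, (n c : ℝ) *
          ((a c * (∑ j, X l i j) + b c i) * (a c * (∑ j, H i j))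
            + (a c * (∑ j, X l i j) + b c i) * (a c * (∑ j, H i j))) := by
        rw [Finset.sum_comm]
    _ = (1/2 : ℝ) * ∑ c, (n c : ℝ) * ∑ i,
          ((a c * (∑ j, X l i j) + b c i) * (a c * (∑ j, H i j))
            + (a c * (∑ j, X l i j) + b c i) * (a c * (∑ j, H i j))) := by
        congr 1
        exact Finset.sum_congr rfl fun c _ => (Finset.mul_sum _ _ _).symm
end

section
/- Let Y ∈ ℝ^{d×N}, D ∈ ℝ^{d×K}, X ∈ ℝ^{K×N} be fixed, with class selectors W_c on dictionary indices and column selectors P_c on sample indices, and let D_0 ∈ ℝ^{d×k_0}, X^0 ∈ ℝ^{k_0×N} be arbitrary. Set Ỹ = Y − DX, Ŷ = Σ_{c=1}^C (Y − D W_c X)P_c, and V = Y − (1/2)·D·M(X) with M(X) = X + Σ_c W_c X P_c. Then (1/2)‖Y − D_0 X^0 − DX‖_F² + Σ_{c=1}^C (1/2)‖(Y − D_0 X^0 − D W_c X)P_c‖_F² = ‖V − D_0 X^0‖_F² + (1/4)‖Ỹ − Ŷ‖_F², where the last term is a constant independent of (D_0, X^0). Consequently, as a function of (D_0, X^0) with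 Y, D, X fixed, the LRSDL fidelity objective equals ‖V − D_0 X^0‖_F² up to an additive constant. -/
open Matrix Finset

lemma frobSq_apply {m n : Type*} [Fintype m] [Fintype n] (A : Matrix m n ℝ) :
    frobSq A = ∑ i, ∑ j, (A i j)^2 := by
  simp [frobSq, Matrix.trace, Matrix.mul_apply, Matrix.diag, sq]

/-- With `Ỹ = Y − DX`, `Ŷ = Σ_c (Y − D W_c X)P_c`, and `V = Y − ½·D·M(X)` where
`M(X) = X + Σ_c W_c X P_c`, for arbitrary `D₀, X⁰` the LRSDL fidelity satisfies
`½‖Y − D₀X⁰ − DX‖² + Σ_c ½‖(Y − D₀X⁰ − D W_c X)P_c‖² = ‖V − D₀X⁰‖² + ¼‖Ỹ − Ŷ‖²`,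
where the last term does not depend on `(D₀, X⁰)`. -/
theorem stmt10 {d N K C k0 : ℕ}
    (Y : Matrix (Fin d) (Fin N) ℝ) (D : Matrix (Fin d) (Fin K) ℝ)
    (X : Matrix (Fin K) (Fin N) ℝ)
    (cl : Fin K → Fin C) (lab : Fin N → Fin C)
    (W : Fin C → Matrix (Fin K) (Fin K) ℝ) (hW : W = sel cl)
    (P : Fin C → Matrix (Fin N) (Fin N) ℝ) (hP : P = sel lab)
    (Ytil : Matrix (Fin d) (Fin N) ℝ) (hYtil : Ytil = Y - D * X)
    (Yhat : Matrix (Fin d) (Fin N) ℝ)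
    (hYhat : Yhat = ∑ c : Fin C, (Y - D * W c * X) * P c)
    (V : Matrix (Fin d) (Fin N) ℝ)
    (hV : V = Y - ((1 : ℝ) / 2) • (D * (X + ∑ c : Fin C, W c * X * P c)))
    (D0 : Matrix (Fin d) (Fin k0) ℝ) (X0 : Matrix (Fin k0) (Fin N) ℝ) :
    (1/2) * frobSq (Y - D0 * X0 - D * X)
      + ∑ c : Fin C, (1/2) * frobSq ((Y - D0 * X0 - D * W c * X) * P c)
    = frobSq (V - D0 * X0) + (1/4) * frobSq (Ytil - Yhat) := by
  subst hW hP hYtil hYhat hV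
  have h2 : ∑ c : Fin C, (1/2) * frobSq ((Y - D0 * X0 - D * sel cl c * X) * sel lab c)
      = ∑ i, ∑ j, (1/2) * ((Y - D0 * X0 - D * sel cl (lab j) * X) i j)^2 := by
    simp only [frobSq_apply, Finset.mul_sum]
    rw [Finset.sum_comm]
    refine Finset.sum_congr rfl fun i _ => ?_
    rw [Finset.sum_comm]
    refine Finset.sum_congr rfl fun j _ => ?_
    simp [sel, Matrix.mul_diagonal, mul_ite, mul_one, mul_zero,
      apply_ite (· ^ (2:ℕ)), Finset.sum_ite_eq]
  rw [h2]
  simp only [frobSq_apply, Finset.mul_sum]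
  rw [← Finset.sum_add_distrib, ← Finset.sum_add_distrib]
  refine Finset.sum_congr rfl fun i _ => ?_
  rw [← Finset.sum_add_distrib, ← Finset.sum_add_distrib]
  refine Finset.sum_congr rfl fun j _ => ?_
  simp only [Matrix.sub_apply, Matrix.smul_apply, Matrix.mul_add, Matrix.mul_sum,
    ← Matrix.mul_assoc, Matrix.add_apply, Matrix.sum_apply, sel, Matrix.mul_diagonal,
    mul_ite, mul_one, mul_zero, Finset.sum_ite_eq, Finset.mem_univ, if_true, smul_eq_mul]
  ring
end

section
/- Let {G_1, …, G_m} be a partition of {1, …, n}, let u ∈ ℝ^n, and let η > 0. For x ∈ ℝ^n write x_{G_i} for the restriction of x to the coordinates in G_i. Then the function x ↦ (1/2)‖x − u‖₂² + η·Σ_{i=1}^m ‖x_{G_i}‖₂ attains its minimum over ℝ^n uniquely at the point x* defined blockwise by x*_{G_i} = max{1 − η/‖u_{G_i}‖₂, 0}·u_{G_i} (interpreted as x*_{G_i} = 0 when u_{G_i} = 0) for each i = 1, …, m. -/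
open Finset

lemma block_key {n : ℕ} (G : Finset (Fin n)) (w v : Fin n → ℝ) (η : ℝ) (hη : 0 < η)
    (c : ℝ) (hc : c = max (1 - η / Real.sqrt (∑ j ∈ G, w j ^ 2)) 0) :
    (1/2) * ∑ j ∈ G, (c * w j - w j)^2 + η * Real.sqrt (∑ j ∈ G, (c * w j)^2)
      + (1/2) * ∑ j ∈ G, (v j - c * w j)^2
    ≤ (1/2) * ∑ j ∈ G, (v j - w j)^2 + η * Real.sqrt (∑ j ∈ G, v j^2) := by
  set Sw := ∑ j ∈ G, w j ^ 2 with hSw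
  set Sv := ∑ j ∈ G, v j ^ 2 with hSv
  set P := ∑ j ∈ G, v j * w j with hP
  have hSw0 : 0 ≤ Sw := Finset.sum_nonneg fun j _ => sq_nonneg _
  have hSv0 : 0 ≤ Sv := Finset.sum_nonneg fun j _ => sq_nonneg _
  set W := Real.sqrt Sw with hW
  set A := Real.sqrt Sv with hA
  have hW0 : 0 ≤ W := Real.sqrt_nonneg _
  have hA0 : 0 ≤ A := Real.sqrt_nonneg _
  have hW2 : W ^ 2 = Sw := Real.sq_sqrt hSw0
  have hA2 : A ^ 2 = Sv := Real.sq_sqrt hSv0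
  have hCS : P ≤ A * W := by
    have := Real.sum_mul_le_sqrt_mul_sqrt G v w
    rwa [← hSv, ← hSw, ← hA, ← hW] at this
  have hc0 : 0 ≤ c := hc ▸ le_max_right _ _
  have e1 : ∑ j ∈ G, (v j - w j)^2 = Sv - 2*P + Sw := by
    simp only [sub_sq, Finset.sum_add_distrib, Finset.sum_sub_distrib, hSv, hSw, hP,
      ← Finset.sum_mul, ← Finset.mul_sum]
    ring_nf
    rw [← Finset.sum_mul]
    ring
  have e2 : ∑ j ∈ G, (c * w j - w j)^2 = (c-1)^2 * Sw := by
    rw [hSw, Finset.mul_sum]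
    exact Finset.sum_congr rfl fun j _ => by ring
  have e3 : ∑ j ∈ G, (v j - c * w j)^2 = Sv - 2*c*P + c^2*Sw := by
    have : ∑ j ∈ G, (v j - c * w j)^2
        = ∑ j ∈ G, (v j ^2 + c^2 * w j ^2 - 2*c*(v j * w j)) :=
      Finset.sum_congr rfl fun j _ => by ring
    rw [this, Finset.sum_sub_distrib, Finset.sum_add_distrib, ← Finset.mul_sum, ← Finset.mul_sum,
      ← hSv, ← hSw, ← hP]
    ring
  have e4 : Real.sqrt (∑ j ∈ G, (c * w j)^2) = c * W := by
    have : ∑ j ∈ G, (c * w j)^2 = c^2 * Sw := by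
      rw [hSw, Finset.mul_sum]; exact Finset.sum_congr rfl fun j _ => by ring
    rw [this, Real.sqrt_mul (sq_nonneg c), Real.sqrt_sq hc0, hW]
  rw [e1, e2, e3, e4]
  clear_value Sw Sv P W A
  -- case split on c
  rcases le_or_gt (1 - η / W) 0 with h1 | h1
  · have hcz : c = 0 := by rw [hc, max_eq_right h1]
    subst hcz
    rcases eq_or_lt_of_le hW0 with hWz | hWpos
    · have : Sw = 0 := by rw [← hW2, ← hWz]; ring
      have hP2 : P ^ 2 ≤ 0 := by
        have h := sum_mul_sq_le_sq_mul_sq G v w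
        rw [← hSv, ← hSw, this, mul_zero] at h
        rw [hP]; exact h
      have hPz : P = 0 := pow_eq_zero_iff two_ne_zero |>.mp
        (le_antisymm hP2 (sq_nonneg P))
      nlinarith [mul_nonneg (le_of_lt hη) hA0]
    · have hWη : W ≤ η := by
        have : 1 ≤ η / W := by linarith
        rw [le_div_iff₀ hWpos] at this; linarith
      nlinarith [mul_le_mul_of_nonneg_left hCS (le_of_lt hη), mul_nonneg hA0 (sub_nonneg.2 hWη)]
  · have hcv : c = 1 - η / W := by rw [hc, max_eq_left (le_of_lt h1)]
    rcases eq_or_lt_of_le hW0 with hWz | hWpos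
    · have hSwz : Sw = 0 := by rw [← hW2, ← hWz]; ring
      have hP2 : P ^ 2 ≤ 0 := by
        have h := sum_mul_sq_le_sq_mul_sq G v w
        rw [← hSv, ← hSw, hSwz, mul_zero] at h
        rw [hP]; exact h
      have hPz : P = 0 := pow_eq_zero_iff two_ne_zero |>.mp
        (le_antisymm hP2 (sq_nonneg P))
      rw [hSwz, hPz, ← hWz]
      nlinarith [mul_nonneg (le_of_lt hη) hA0]
    · have hcW : c * W = W - η := by
        rw [hcv]; field_simp
      have h1c : (1 - c) * W = η := by
        have hr : (1 - c) * W = W - c * W := by ring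
        rw [hr, hcW]; ring
      have h1c0 : 0 ≤ 1 - c := by
        rw [hcv]; simp; positivity
      have hstep : (1 - c) * P ≤ (1 - c) * (A * W) :=
        mul_le_mul_of_nonneg_left hCS h1c0
      have hcm : (c - 1) * W = -η := by
        have hr : (c - 1) * W = c * W - W := by ring
        rw [hr, hcW]; ring
      have hAW : (1 - c) * (A * W) = η * A := by
        have hr : (1 - c) * (A * W) = ((1 - c) * W) * A := by ring
        rw [hr, h1c]
      have hzero : c * (c - 1) * W ^ 2 + η * (c * W) = 0 := by
        have hr : c * (c - 1) * W ^ 2 = (c * W) * ((c - 1) * W) := by ring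
        rw [hr, hcW, hcm]; ring
      rw [← hW2]
      clear hW hA hc hcv h1 e1 e2 e3 e4 hP hSv hSw hW2 hA2 hSw0 hSv0 hCS hcW h1c hcm h1c0
      nlinarith [hstep, hAW, hzero]

/-- Let `{G_1, …, G_m}` be a partition of `{1, …, n}` (pairwise disjoint nonempty blocks
covering everything, with `π j` the block of coordinate `j`), `u ∈ ℝⁿ`, `η > 0`. Then
`x ↦ ½‖x − u‖₂² + η·Σᵢ ‖x_{G_i}‖₂` attains its minimum over `ℝⁿ` uniquely at the point
`x*` given blockwise by `x*_{G_i} = max{1 − η/‖u_{G_i}‖₂, 0}·u_{G_i}`. -/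
theorem stmt15 {n m : ℕ} (G : Fin m → Finset (Fin n))
    (hdisj : ∀ i₁ i₂, i₁ ≠ i₂ → Disjoint (G i₁) (G i₂))
    (hne : ∀ i, (G i).Nonempty)
    (π : Fin n → Fin m) (hπ : ∀ j, j ∈ G (π j))
    (u : Fin n → ℝ) (η : ℝ) (hη : 0 < η)
    (blockNorm : (Fin n → ℝ) → Fin m → ℝ)
    (hbn : ∀ x i, blockNorm x i = Real.sqrt (∑ j ∈ G i, x j ^ 2))
    (f : (Fin n → ℝ) → ℝ)
    (hf : ∀ x, f x = (1/2) * (∑ j, (x j - u j) ^ 2) + η * ∑ i, blockNorm x i)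
    (xstar : Fin n → ℝ)
    (hx : ∀ j, xstar j = max (1 - η / blockNorm u (π j)) 0 * u j) :
    (∀ x, f xstar ≤ f x) ∧ (∀ x, (∀ y, f x ≤ f y) → x = xstar) := by
  have hπi : ∀ i, ∀ j ∈ G i, π j = i := by
    intro i j hj
    by_contra hne'
    exact Finset.disjoint_left.mp (hdisj _ _ hne') (hπ j) hj
  have hGfilter : ∀ i, G i = univ.filter (fun j => π j = i) := by
    intro i
    ext j
    simp only [Finset.mem_filter, Finset.mem_univ, true_and]
    exact ⟨fun hj => hπi i j hj, fun h => h ▸ hπ j⟩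
  have hdecomp : ∀ F : Fin n → ℝ, ∑ i, ∑ j ∈ G i, F j = ∑ j, F j := by
    intro F
    calc ∑ i, ∑ j ∈ G i, F j
        = ∑ i, ∑ j ∈ univ.filter (fun j => π j = i), F j :=
          Finset.sum_congr rfl fun i _ => by rw [hGfilter i]
      _ = ∑ j, F j := Finset.sum_fiberwise _ _ _
  have main : ∀ (x : Fin n → ℝ) (i : Fin m),
      (1/2) * ∑ j ∈ G i, (xstar j - u j)^2 + η * Real.sqrt (∑ j ∈ G i, xstar j ^ 2)
        + (1/2) * ∑ j ∈ G i, (x j - xstar j)^2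
      ≤ (1/2) * ∑ j ∈ G i, (x j - u j)^2 + η * Real.sqrt (∑ j ∈ G i, x j ^ 2) := by
    intro x i
    set c := max (1 - η / Real.sqrt (∑ j ∈ G i, u j ^ 2)) 0 with hc
    have hxs : ∀ j ∈ G i, xstar j = c * u j := by
      intro j hj
      rw [hx j, hπi i j hj, hbn, hc]
    have r1 : ∑ j ∈ G i, (xstar j - u j)^2 = ∑ j ∈ G i, (c * u j - u j)^2 :=
      Finset.sum_congr rfl fun j hj => by rw [hxs j hj]
    have r2 : ∑ j ∈ G i, xstar j ^ 2 = ∑ j ∈ G i, (c * u j)^2 :=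
      Finset.sum_congr rfl fun j hj => by rw [hxs j hj]
    have r3 : ∑ j ∈ G i, (x j - xstar j)^2 = ∑ j ∈ G i, (x j - c * u j)^2 :=
      Finset.sum_congr rfl fun j hj => by rw [hxs j hj]
    rw [r1, r2, r3]
    exact block_key (G i) u x η hη c hc
  have key : ∀ x, f xstar + (1/2) * ∑ j, (x j - xstar j)^2 ≤ f x := by
    intro x
    rw [hf, hf]
    rw [← hdecomp (fun j => (xstar j - u j)^2), ← hdecomp (fun j => (x j - u j)^2),
      ← hdecomp (fun j => (x j - xstar j)^2)]
    simp only [hbn]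
    calc (1/2) * ∑ i, ∑ j ∈ G i, (xstar j - u j)^2
          + η * ∑ i, Real.sqrt (∑ j ∈ G i, xstar j ^ 2)
          + (1/2) * ∑ i, ∑ j ∈ G i, (x j - xstar j)^2
        = ∑ i, ((1/2) * ∑ j ∈ G i, (xstar j - u j)^2
            + η * Real.sqrt (∑ j ∈ G i, xstar j ^ 2)
            + (1/2) * ∑ j ∈ G i, (x j - xstar j)^2) := by
          rw [Finset.sum_add_distrib, Finset.sum_add_distrib, ← Finset.mul_sum,
            ← Finset.mul_sum, ← Finset.mul_sum]
      _ ≤ ∑ i, ((1/2) * ∑ j ∈ G i, (x j - u j)^2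
            + η * Real.sqrt (∑ j ∈ G i, x j ^ 2)) :=
          Finset.sum_le_sum fun i _ => main x i
      _ = (1/2) * ∑ i, ∑ j ∈ G i, (x j - u j)^2
            + η * ∑ i, Real.sqrt (∑ j ∈ G i, x j ^ 2) := by
          rw [Finset.sum_add_distrib, ← Finset.mul_sum, ← Finset.mul_sum]
  constructor
  · intro x
    have h := key x
    have hnn : 0 ≤ ∑ j, (x j - xstar j)^2 := Finset.sum_nonneg fun j _ => sq_nonneg _
    linarith
  · intro x hmin
    have h1 := key x
    have h2 := hmin xstar
    have hnn : ∀ j ∈ Finset.univ, 0 ≤ (x j - xstar j)^2 := fun j _ => sq_nonneg _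
    have hs : ∑ j, (x j - xstar j)^2 = 0 :=
      le_antisymm (by linarith [Finset.sum_nonneg hnn]) (Finset.sum_nonneg hnn)
    funext j
    have hj0 : (x j - xstar j)^2 = 0 :=
      (Finset.sum_eq_zero_iff_of_nonneg hnn).mp hs j (Finset.mem_univ j)
    have := pow_eq_zero_iff two_ne_zero |>.mp hj0
    linarith [this]
end
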